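/- Let δ > 0, ν > 0, η ≠ 0 and μ ∈ ℝ with c := 1 − μ/(ην) > 0. Then sup_{π ∈ ℝ} { πμ − (ν/δ)(e^{−δ(ψ + πη)} − 1 + δ(ψ + πη)) } = −(μ/η)ψ + (μ/(δη)) + (ν/δ)·c·ln c, equivalently the pure-jump exponential BSDE driver equals f(z,ψ) = −(δ/2)z² + (ν/δ)(1 − μ/(ην))ln(1 − μ/(ην)) − (μ/η)(ψ − 1/δ). -/

import Mathlib

/-- Explicit value of the supremum in the pure-jump exponential driver:
`sup_π { πμ − (ν/δ)(e^{−δ(ψ+πη)} − 1 + δ(ψ+πη)) } = −(μ/η)ψ + μ/(δη) + (ν/δ)·c·ln c`,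
with `c = 1 − μ/(ην)`; equivalently the driver equals
`f(z,ψ) = −(δ/2)z² + (ν/δ)c ln c − (μ/η)(ψ − 1/δ)`. -/
theorem pure_jump_exponential_driver_explicit
    (δ ν μ η : ℝ) (hδ : δ > 0) (hν : ν > 0) (hη : η ≠ 0)
    (hc : 1 - μ / (η * ν) > 0) :
    (∀ ψ : ℝ,
      (⨆ π : ℝ, (π * μ
          - (ν / δ) * (Real.exp (-δ * (ψ + π * η)) - 1 + δ * (ψ + π * η))))
        = -(μ / η) * ψ + μ / (δ * η)
          + (ν / δ) * (1 - μ / (η * ν)) * Real.log (1 - μ / (η * ν))) ∧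
    (∀ z ψ : ℝ,
      (⨆ π : ℝ, (π * μ
          - (ν / δ) * (Real.exp (-δ * (ψ + π * η)) - 1 + δ * (ψ + π * η))))
        - (δ / 2) * z ^ 2
      = -(δ / 2) * z ^ 2
          + (ν / δ) * (1 - μ / (η * ν)) * Real.log (1 - μ / (η * ν))
          - (μ / η) * (ψ - 1 / δ)) := by
  set c : ℝ := 1 - μ / (η * ν) with hcdef
  set L : ℝ := Real.log c with hLdef
  have hm : μ / η = ν * (1 - c) := by
    rw [hcdef]; field_simp; ring
  have hμ : μ = ν * (1 - c) * η := by
    rw [← hm]; field_simp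
  have hexpL : Real.exp L = c := Real.exp_log hc
  have key : ∀ ψ : ℝ,
      (⨆ π : ℝ, (π * μ
          - (ν / δ) * (Real.exp (-δ * (ψ + π * η)) - 1 + δ * (ψ + π * η))))
        = -(μ / η) * ψ + μ / (δ * η) + (ν / δ) * c * L := by
    intro ψ
    have hub : ∀ π : ℝ, (π * μ
          - (ν / δ) * (Real.exp (-δ * (ψ + π * η)) - 1 + δ * (ψ + π * η)))
        ≤ -(μ / η) * ψ + μ / (δ * η) + (ν / δ) * c * L := by
      intro π
      have hk := Real.add_one_le_exp (-δ * (ψ + π * η) - L)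
      have he : Real.exp (-δ * (ψ + π * η) - L)
          = Real.exp (-δ * (ψ + π * η)) / c := by
        rw [Real.exp_sub, hexpL]
      rw [he] at hk
      have hk2 : c * (-δ * (ψ + π * η) - L + 1) ≤ Real.exp (-δ * (ψ + π * η)) := by
        rw [div_eq_inv_mul] at hk
        calc c * (-δ * (ψ + π * η) - L + 1)
            ≤ c * (c⁻¹ * Real.exp (-δ * (ψ + π * η))) :=
              mul_le_mul_of_nonneg_left hk hc.le
          _ = Real.exp (-δ * (ψ + π * η)) := by field_simp
      have hνδ : 0 < ν / δ := div_pos hν hδ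
      have hk3 := mul_le_mul_of_nonneg_left hk2 hνδ.le
      have hmm : μ / (δ * η) = ν * (1 - c) / δ := by rw [hμ]; field_simp
      rw [hm, hmm, hμ]
      rw [← mul_le_mul_iff_right₀ hδ]
      have hk4 := mul_le_mul_of_nonneg_left hk2 hν.le
      have hd : δ ≠ 0 := ne_of_gt hδ
      field_simp
      rw [neg_mul] at hk4
      nlinarith [hk4]
    apply le_antisymm
    · exact ciSup_le hub
    · have hbdd : BddAbove (Set.range fun π : ℝ => (π * μ
          - (ν / δ) * (Real.exp (-δ * (ψ + π * η)) - 1 + δ * (ψ + π * η)))) := by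
        refine ⟨-(μ / η) * ψ + μ / (δ * η) + ν / δ * c * L, ?_⟩
        rintro x ⟨π, rfl⟩
        exact hub π
      have hval : ((-L / δ - ψ) / η) * μ
          - (ν / δ) * (Real.exp (-δ * (ψ + ((-L / δ - ψ) / η) * η)) - 1
            + δ * (ψ + ((-L / δ - ψ) / η) * η))
          = -(μ / η) * ψ + μ / (δ * η) + (ν / δ) * c * L := by
        have ht : ψ + ((-L / δ - ψ) / η) * η = -L / δ := by field_simp; ring
        rw [ht]
        have : -δ * (-L / δ) = L := by field_simp
        rw [this, hexpL, hμ]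
        field_simp
        ring
      rw [← hval]
      exact le_ciSup hbdd ((-L / δ - ψ) / η)
  constructor
  · intro ψ; rw [key ψ]
  · intro z ψ; rw [key ψ]; ring
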